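/- Let V be a real vector space of dimension 2. Define the Ricci map ρ : R(V) → (bilinear forms on V) by ρ(R)(x, y) := trace(v ↦ R(x, v, y)), and let ρ_s(R)(x,y) = (1/2)(ρ(R)(x,y) + ρ(R)(y,x)) and ρ_a(R)(x,y) = (1/2)(ρ(R)(x,y) − ρ(R)(y,x)) be its symmetric and antisymmetric parts. Then the linear map R ↦ (ρ_s(R), ρ_a(R)) is a linear isomorphism from R(V) onto the direct sum of the space of symmetric bilinear forms on V and the space of alternating bilinear forms on V. -/

import Mathlib

variable (V : Type*) [AddCommGroup V] [Module ℝ V]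

/-- `R(V)`: curvature-like tensors, i.e. trilinear maps `R : V³ → V` antisymmetric in
their first two arguments and satisfying the linear Bianchi identity. -/
def CurvLike : Submodule ℝ (V →ₗ[ℝ] V →ₗ[ℝ] V →ₗ[ℝ] V) where
  carrier := {R | (∀ x y z : V, R x y z = - R y x z) ∧
    (∀ x y z : V, R x y z + R z x y + R y z x = 0)}
  add_mem' := by
    rintro a b ⟨ha1, ha2⟩ ⟨hb1, hb2⟩
    refine ⟨fun x y z => ?_, fun x y z => ?_⟩
    · simp only [LinearMap.add_apply]
      rw [ha1 x y z, hb1 x y z]; abel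
    · have h := congrArg₂ (· + ·) (ha2 x y z) (hb2 x y z)
      simp only [add_zero] at h
      simp only [LinearMap.add_apply]
      rw [← h]; abel
  zero_mem' := by
    refine ⟨fun x y z => ?_, fun x y z => ?_⟩ <;> simp
  smul_mem' := by
    rintro c a ⟨ha1, ha2⟩
    refine ⟨fun x y z => ?_, fun x y z => ?_⟩
    · simp only [LinearMap.smul_apply]
      rw [ha1 x y z, smul_neg]
    · simp only [LinearMap.smul_apply, ← smul_add]
      rw [ha2 x y z, smul_zero]

/-- Symmetric bilinear forms on `V`. -/
noncomputable def SymBilin : Submodule ℝ (V →ₗ[ℝ] V →ₗ[ℝ] ℝ) where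
  carrier := {B | ∀ x y : V, B x y = B y x}
  add_mem' := by
    intro a b ha hb
    exact fun x y => by simp [ha x y, hb x y]
  zero_mem' := by intro x y; simp
  smul_mem' := by
    intro c a ha
    exact fun x y => by simp [ha x y]

/-- Alternating (antisymmetric) bilinear forms on `V`. -/
noncomputable def AltBilin : Submodule ℝ (V →ₗ[ℝ] V →ₗ[ℝ] ℝ) where
  carrier := {ω | ∀ x y : V, ω x y = - ω y x}
  add_mem' := by
    intro a b ha hb
    intro x y
    simp only [LinearMap.add_apply]
    rw [ha x y, hb x y]; ring
  zero_mem' := by intro x y; simp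
  smul_mem' := by
    intro c a ha
    intro x y
    simp only [LinearMap.smul_apply]
    rw [ha x y, smul_neg]

/-- The Ricci contraction `ρ(R)(x,y) = trace (v ↦ R(x,v,y))`. -/
noncomputable def Ricci (R : V →ₗ[ℝ] V →ₗ[ℝ] V →ₗ[ℝ] V) (x y : V) : ℝ :=
  LinearMap.trace ℝ V ((R x).flip y)


noncomputable def ricciForm : (V →ₗ[ℝ] V →ₗ[ℝ] V →ₗ[ℝ] V) →ₗ[ℝ] (V →ₗ[ℝ] V →ₗ[ℝ] ℝ) :=
  LinearMap.llcomp ℝ V (V →ₗ[ℝ] V →ₗ[ℝ] V) (V →ₗ[ℝ] ℝ)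
    ((LinearMap.llcomp ℝ V (V →ₗ[ℝ] V) ℝ (LinearMap.trace ℝ V)).comp LinearMap.lflip.toLinearMap)

noncomputable def symPart : (V →ₗ[ℝ] V →ₗ[ℝ] ℝ) →ₗ[ℝ] (V →ₗ[ℝ] V →ₗ[ℝ] ℝ) :=
  (2⁻¹ : ℝ) • (LinearMap.id + LinearMap.lflip.toLinearMap)
noncomputable def altPart : (V →ₗ[ℝ] V →ₗ[ℝ] ℝ) →ₗ[ℝ] (V →ₗ[ℝ] V →ₗ[ℝ] ℝ) :=
  (2⁻¹ : ℝ) • (LinearMap.id + (-1 : ℝ) • LinearMap.lflip.toLinearMap)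

@[simp] lemma symPart_apply (B : V →ₗ[ℝ] V →ₗ[ℝ] ℝ) (x y : V) :
    symPart V B x y = 2⁻¹ * (B x y + B y x) := by
  simp [symPart, LinearMap.lflip_apply]; ring
@[simp] lemma altPart_apply (B : V →ₗ[ℝ] V →ₗ[ℝ] ℝ) (x y : V) :
    altPart V B x y = 2⁻¹ * (B x y - B y x) := by
  simp [altPart, LinearMap.lflip_apply]; ring

noncomputable def eps (b : Module.Basis (Fin 2) ℝ V) : V →ₗ[ℝ] V →ₗ[ℝ] ℝ :=
  LinearMap.mk₂ ℝ (fun x y => b.coord 0 x * b.coord 1 y - b.coord 1 x * b.coord 0 y)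
    (fun x x' y => by simp; ring) (fun c x y => by simp; ring)
    (fun x y y' => by simp; ring) (fun c x y => by simp; ring)

@[simp] lemma eps_apply (b : Module.Basis (Fin 2) ℝ V) (x y : V) :
    eps V b x y = b.repr x 0 * b.repr y 1 - b.repr x 1 * b.repr y 0 := by
  simp [eps, Module.Basis.coord_apply]

lemma eps_cyclic (b : Module.Basis (Fin 2) ℝ V) (x y z : V) :
    eps V b x y • z + eps V b z x • y + eps V b y z • x = 0 := by
  have hx := b.sum_repr x
  have hy := b.sum_repr y
  have hz := b.sum_repr z
  rw [Fin.sum_univ_two] at hx hy hz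
  rw [← hx, ← hy, ← hz]
  simp only [eps_apply, map_add, map_smul, Module.Basis.repr_self, Finsupp.smul_single,
    Finsupp.single_apply, Finsupp.add_apply, smul_eq_mul]
  norm_num
  module

noncomputable def curvOf (ε : V →ₗ[ℝ] V →ₗ[ℝ] ℝ) (A : V →ₗ[ℝ] V) :
    V →ₗ[ℝ] V →ₗ[ℝ] V →ₗ[ℝ] V :=
  ε.compr₂ (LinearMap.toSpanSingleton ℝ (V →ₗ[ℝ] V) A)

@[simp] lemma curvOf_apply (ε : V →ₗ[ℝ] V →ₗ[ℝ] ℝ) (A : V →ₗ[ℝ] V) (x y z : V) :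
    curvOf V ε A x y z = ε x y • A z := rfl

lemma trace_formula (b : Module.Basis (Fin 2) ℝ V) (f : V →ₗ[ℝ] V) :
    LinearMap.trace ℝ V f = b.repr (f (b 0)) 0 + b.repr (f (b 1)) 1 := by
  rw [LinearMap.trace_eq_matrix_trace ℝ b f, Matrix.trace]
  simp [LinearMap.toMatrix_apply, Fin.sum_univ_two, Matrix.diag]

lemma ricciForm_eval (b : Module.Basis (Fin 2) ℝ V) (R : V →ₗ[ℝ] V →ₗ[ℝ] V →ₗ[ℝ] V) (x y : V) :
    ricciForm V R x y = b.repr (R x (b 0) y) 0 + b.repr (R x (b 1) y) 1 :=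
  trace_formula V b ((R x).flip y)

lemma curv_inj (b : Module.Basis (Fin 2) ℝ V) (R R' : V →ₗ[ℝ] V →ₗ[ℝ] V →ₗ[ℝ] V)
    (hR : ∀ x y z, R x y z = -R y x z) (hR' : ∀ x y z, R' x y z = -R' y x z)
    (h : ricciForm V R = ricciForm V R') : R = R' := by
  have hxx : ∀ (S : V →ₗ[ℝ] V →ₗ[ℝ] V →ₗ[ℝ] V), (∀ x y z, S x y z = -S y x z) →
      ∀ x z, S x x z = 0 := by
    intro S hS x z
    have h1 := hS x x z
    have h2 : (2 : ℝ) • S x x z = 0 := by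
      rw [two_smul]; nth_rewrite 2 [h1]; simp
    simpa using smul_eq_zero.mp h2
  have hval : ∀ y, R (b 0) (b 1) y = R' (b 0) (b 1) y := by
    intro y
    have h0 : b.repr (R (b 0) (b 0) y) 0 + b.repr (R (b 0) (b 1) y) 1
        = b.repr (R' (b 0) (b 0) y) 0 + b.repr (R' (b 0) (b 1) y) 1 := by
      rw [← ricciForm_eval V b, ← ricciForm_eval V b, h]
    have h1 : b.repr (R (b 1) (b 0) y) 0 + b.repr (R (b 1) (b 1) y) 1
        = b.repr (R' (b 1) (b 0) y) 0 + b.repr (R' (b 1) (b 1) y) 1 := by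
      rw [← ricciForm_eval V b, ← ricciForm_eval V b, h]
    rw [hxx R hR, hxx R' hR'] at h0 h1
    rw [hR (b 1) (b 0) y, hR' (b 1) (b 0) y] at h1
    simp only [map_zero, map_neg, Finsupp.zero_apply, Finsupp.neg_apply, zero_add,
      add_zero, neg_inj] at h0 h1
    apply b.repr.injective
    ext i
    fin_cases i
    · exact h1
    · exact h0
  have h10 : ∀ y, R (b 1) (b 0) y = R' (b 1) (b 0) y := fun y => by
    rw [hR (b 1) (b 0) y, hR' (b 1) (b 0) y, hval y]
  refine b.ext fun i => b.ext fun j => LinearMap.ext fun y => ?_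
  fin_cases i <;> fin_cases j <;>
    simp [hxx R hR, hxx R' hR', hval, h10]

noncomputable def toPair : CurvLike V →ₗ[ℝ] (SymBilin V × AltBilin V) :=
  LinearMap.prod
    (((symPart V).comp ((ricciForm V).comp (CurvLike V).subtype)).codRestrict (SymBilin V)
      (fun R x y => by simp [add_comm]))
    (((altPart V).comp ((ricciForm V).comp (CurvLike V).subtype)).codRestrict (AltBilin V)
      (fun R x y => by simp; ring))

/-- If `dim V = 2`, the map `R ↦ (ρ_s(R), ρ_a(R))`, sending a curvature-like tensor to
the symmetric and antisymmetric parts of its Ricci contraction, is a linear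
isomorphism from `R(V)` onto (symmetric bilinear forms) ⊕ (alternating bilinear
forms). -/
theorem curvLike_equiv_symBilin_prod_altBilin
    (V : Type*) [AddCommGroup V] [Module ℝ V] [FiniteDimensional ℝ V]
    (hdim : Module.finrank ℝ V = 2) :
    ∃ e : CurvLike V ≃ₗ[ℝ] (SymBilin V × AltBilin V),
      ∀ (R : CurvLike V) (x y : V),
        ((e R).1).1 x y = (2 : ℝ)⁻¹ * (Ricci V R.1 x y + Ricci V R.1 y x) ∧
        ((e R).2).1 x y = (2 : ℝ)⁻¹ * (Ricci V R.1 x y - Ricci V R.1 y x) := by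
  classical
  have b : Module.Basis (Fin 2) ℝ V := Module.finBasisOfFinrankEq ℝ V hdim
  have hinj : Function.Injective (toPair V) := by
    intro a c hac
    have h1 : symPart V (ricciForm V a.1) = symPart V (ricciForm V c.1) :=
      congrArg Subtype.val (congrArg Prod.fst hac)
    have h2 : altPart V (ricciForm V a.1) = altPart V (ricciForm V c.1) :=
      congrArg Subtype.val (congrArg Prod.snd hac)
    have hρ : ricciForm V a.1 = ricciForm V c.1 := by
      ext x y
      have e1 := congrFun (congrArg (fun f => (DFunLike.coe f x : V → ℝ)) h1) y
      have e2 := congrFun (congrArg (fun f => (DFunLike.coe f x : V → ℝ)) h2) y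
      simp only [symPart_apply, altPart_apply] at e1 e2
      linarith
    exact Subtype.ext (curv_inj V b a.1 c.1 a.2.1 c.2.1 hρ)
  have hsurj : Function.Surjective (toPair V) := by
    rintro ⟨⟨S, hS⟩, ⟨ω, hω⟩⟩
    set T : V →ₗ[ℝ] V →ₗ[ℝ] ℝ := S + ω with hT
    set A : V →ₗ[ℝ] V :=
      b.constr ℝ (fun j => (-(T (b 1) (b j))) • b 0 + (T (b 0) (b j)) • b 1) with hA
    set Rc := curvOf V (eps V b) A with hRc
    have hmem : Rc ∈ CurvLike V := by
      constructor
      · intro x y z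
        rw [curvOf_apply, curvOf_apply, ← neg_smul]
        congr 1
        simp only [eps_apply]; ring
      · intro x y z
        have hc := eps_cyclic V b x y z
        calc Rc x y z + Rc z x y + Rc y z x
            = A (eps V b x y • z + eps V b z x • y + eps V b y z • x) := by
              simp [hRc, map_add, map_smul]
          _ = 0 := by rw [hc, map_zero]
    have hAb : ∀ j, A (b j) = (-(T (b 1) (b j))) • b 0 + (T (b 0) (b j)) • b 1 := by
      intro j; rw [hA, Module.Basis.constr_basis]
    have hRic : ricciForm V Rc = T := by
      refine b.ext fun i => b.ext fun j => ?_
      rw [ricciForm_eval V b]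
      fin_cases i <;>
        simp [hRc, hAb, map_add, map_smul, Module.Basis.repr_self, Finsupp.smul_single,
          Finsupp.single_apply, Finsupp.add_apply]
    refine ⟨⟨Rc, hmem⟩, ?_⟩
    refine Prod.ext (Subtype.ext ?_) (Subtype.ext ?_)
    · show symPart V (ricciForm V Rc) = S
      rw [hRic]
      refine LinearMap.ext fun x => LinearMap.ext fun y => ?_
      rw [symPart_apply]
      simp only [hT, LinearMap.add_apply]
      rw [hS y x, hω y x]; ring
    · show altPart V (ricciForm V Rc) = ω
      rw [hRic]
      refine LinearMap.ext fun x => LinearMap.ext fun y => ?_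
      rw [altPart_apply]
      simp only [hT, LinearMap.add_apply]
      rw [hS y x, hω y x]; ring
  refine ⟨LinearEquiv.ofBijective (toPair V) ⟨hinj, hsurj⟩, fun R x y => ?_⟩
  constructor
  · show symPart V (ricciForm V R.1) x y = _
    rw [symPart_apply]; rfl
  · show altPart V (ricciForm V R.1) x y = _
    rw [altPart_apply]; rfl
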